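/- Let X be a compact metric space and n ≥ 0, R > 0. Then width_n(X) < R if and only if there exists a finite simplicial complex N of dimension at most n and a continuous map ψ : X → N such that every fiber ψ⁻¹(s), s ∈ N, has radius less than R in X. -/

import Mathlib

open Metric ENNReal Geometry

/-- The radius of a subset `A` of a metric space `X`: the infimum of `R` such that `A` is
contained in a ball `B(x, R)` for some `x ∈ X`. -/
noncomputable def setRadius {X : Type*} [MetricSpace X] (A : Set X) : ℝ≥0∞ :=
  ⨅ (x : X) (R : ℝ≥0∞) (_ : A ⊆ EMetric.ball x R), R

/-- The `m`-th width of a metric space `X`: the infimum, over finite open covers of `X` of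
multiplicity at most `m + 1`, of the largest radius of a member of the cover. -/
noncomputable def width (X : Type*) [MetricSpace X] (m : ℕ) : ℝ≥0∞ :=
  ⨅ (k : ℕ) (V : Fin k → Set X)
    (_ : ∀ i, IsOpen (V i)) (_ : ⋃ i, V i = Set.univ)
    (_ : ∀ x : X, Nat.card {i : Fin k // x ∈ V i} ≤ m + 1),
    ⨆ i, setRadius (V i)


open Finset MeasureTheory

namespace WidthProof

set_option linter.unusedSectionVars false

variable {κ : Type*} [Fintype κ] [DecidableEq κ]

noncomputable def mn (w : Finset κ) (T : κ → ℝ) : ℝ :=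
  if h : w.Nonempty then w.inf' h T else 0

noncomputable def mx (w : Finset κ) (T : κ → ℝ) : ℝ :=
  (wᶜ).fold max 0 T

lemma mn_le {w : Finset κ} {T : κ → ℝ} {i : κ} (hi : i ∈ w) : mn w T ≤ T i := by
  rw [mn, dif_pos ⟨i, hi⟩]; exact inf'_le _ hi

lemma lt_mn_iff {w : Finset κ} (hw : w.Nonempty) {T : κ → ℝ} {a : ℝ} :
    a < mn w T ↔ ∀ i ∈ w, a < T i := by
  rw [mn, dif_pos hw]; exact lt_inf'_iff hw

lemma mx_nonneg (w : Finset κ) (T : κ → ℝ) : 0 ≤ mx w T :=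
  (le_fold_max _).2 (Or.inl le_rfl)

lemma le_mx {w : Finset κ} {T : κ → ℝ} {i : κ} (hi : i ∉ w) : T i ≤ mx w T :=
  (le_fold_max _).2 (Or.inr ⟨i, by simpa using hi, le_rfl⟩)

lemma mx_le_iff {w : Finset κ} {T : κ → ℝ} {a : ℝ} :
    mx w T ≤ a ↔ 0 ≤ a ∧ ∀ i ∉ w, T i ≤ a := by
  rw [mx, fold_max_le]; simp

lemma mem_iff_of_mem_Ico {w : Finset κ} (hw : w.Nonempty) {T : κ → ℝ} {θ : ℝ}
    (hθ : θ ∈ Set.Ico (mx w T) (mn w T)) : ∀ j, j ∈ w ↔ θ < T j := by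
  intro j
  constructor
  · exact fun hj => lt_of_lt_of_le ((lt_mn_iff hw).1 hθ.2 j hj) le_rfl
  · intro h; by_contra hj
    exact absurd (le_trans (le_mx hj) hθ.1) (not_le.2 h)

/-- Key identity: the positive parts `(mn w T - mx w T)⁺` over all nonempty `w ∋ i` sum
to `T i`, for nonnegative `T`. -/
lemma sum_posPart_eq {T : κ → ℝ} (hT : ∀ i, 0 ≤ T i) (i : κ) :
    ∑ w ∈ univ.filter (fun w : {s : Finset κ // s.Nonempty} => i ∈ w.1),
      max (mn w.1 T - mx w.1 T) 0 = T i := by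
  classical
  set F := univ.filter (fun w : {s : Finset κ // s.Nonempty} => i ∈ w.1) with hF
  have hmeas : ∀ w ∈ F, MeasurableSet (Set.Ico (mx (w : {s : Finset κ // s.Nonempty}).1 T)
      (mn (w : {s : Finset κ // s.Nonempty}).1 T)) := fun w _ => measurableSet_Ico
  have hdisj : (F : Set {s : Finset κ // s.Nonempty}).PairwiseDisjoint
      (fun w => Set.Ico (mx w.1 T) (mn w.1 T)) := by
    intro w _ w' _ hne
    refine Set.disjoint_left.2 fun θ hθ hθ' => hne ?_
    ext1
    ext j
    rw [mem_iff_of_mem_Ico w.2 hθ j, mem_iff_of_mem_Ico w'.2 hθ' j]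
  have hunion : (⋃ w ∈ F, Set.Ico (mx (w:{s : Finset κ // s.Nonempty}).1 T) (mn w.1 T))
      = Set.Ico 0 (T i) := by
    ext θ
    simp only [Set.mem_iUnion, Set.mem_Ico, exists_prop]
    constructor
    · rintro ⟨w, hwF, hθ⟩
      have hiw : i ∈ w.1 := by simpa [hF] using hwF
      exact ⟨le_trans (mx_nonneg _ _) hθ.1, lt_of_lt_of_le hθ.2 (mn_le hiw)⟩
    · rintro ⟨h0, hlt⟩
      refine ⟨⟨univ.filter (fun j => θ < T j), ⟨i, by simpa using hlt⟩⟩, ?_, ?_, ?_⟩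
      · simp [hF, hlt]
      · rw [mx_le_iff]
        exact ⟨h0, fun j hj => by simpa using not_lt.1 (by simpa using hj)⟩
      · rw [lt_mn_iff ⟨i, by simpa using hlt⟩]
        intro j hj; simpa using hj

  have hvol := measure_biUnion_finset hdisj hmeas (μ := volume)
  rw [hunion] at hvol
  have := congrArg ENNReal.toReal hvol
  rw [Real.volume_Ico, ENNReal.toReal_ofReal (by linarith [hT i]),
    ENNReal.toReal_sum (fun w _ => by rw [Real.volume_Ico]; exact ENNReal.ofReal_ne_top)] at this
  rw [sub_zero] at this
  rw [this]
  refine Finset.sum_congr rfl fun w _ => ?_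
  rw [Real.volume_Ico, ENNReal.toReal_ofReal', max_comm]

end WidthProof

namespace WidthProof
set_option linter.unusedSectionVars false

variable {κ : Type*} [Fintype κ] [DecidableEq κ]

/-- Barycentric-subdivision coordinate transformation. -/
noncomputable def Phi (T : κ → ℝ) (w : {s : Finset κ // s.Nonempty}) : ℝ :=
  (w.1.card : ℝ) * max (mn w.1 T - mx w.1 T) 0

lemma Phi_nonneg (T : κ → ℝ) (w : {s : Finset κ // s.Nonempty}) : 0 ≤ Phi T w :=
  mul_nonneg (by positivity) (le_max_right _ _)

lemma Phi_ne_zero_iff {T : κ → ℝ} {w : {s : Finset κ // s.Nonempty}} :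
    Phi T w ≠ 0 ↔ mx w.1 T < mn w.1 T := by
  rw [Phi]
  constructor
  · intro h
    by_contra hc
    push_neg at hc
    rw [max_eq_right (by linarith), mul_zero] at h
    exact h rfl
  · intro h
    have hc : (w.1.card : ℝ) ≠ 0 := by
      simp [Finset.card_ne_zero.2 w.2]
    have : max (mn w.1 T - mx w.1 T) 0 = mn w.1 T - mx w.1 T := max_eq_left (by linarith)
    rw [this]
    exact mul_ne_zero hc (by linarith)

lemma Phi_pos_of_mem {T : κ → ℝ} {w : {s : Finset κ // s.Nonempty}} (h : Phi T w ≠ 0) :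
    ∀ i ∈ w.1, 0 < T i := by
  intro i hi
  have := Phi_ne_zero_iff.1 h
  calc (0:ℝ) ≤ mx w.1 T := mx_nonneg _ _
    _ < mn w.1 T := this
    _ ≤ T i := mn_le hi

lemma Phi_chain {T : κ → ℝ} {w w' : {s : Finset κ // s.Nonempty}}
    (h : Phi T w ≠ 0) (h' : Phi T w' ≠ 0) : w.1 ⊆ w'.1 ∨ w'.1 ⊆ w.1 := by
  by_contra hcon
  push_neg at hcon
  obtain ⟨i, hi, hi'⟩ := Finset.not_subset.1 hcon.1
  obtain ⟨j, hj, hj'⟩ := Finset.not_subset.1 hcon.2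
  have h1 : T i ≤ mx w'.1 T := le_mx hi'
  have h2 : T j ≤ mx w.1 T := le_mx hj'
  have h3 := Phi_ne_zero_iff.1 h
  have h4 := Phi_ne_zero_iff.1 h'
  have h5 : mn w.1 T ≤ T i := mn_le hi
  have h6 : mn w'.1 T ≤ T j := mn_le hj
  linarith

/-- The representation identity: applying `Phi` and taking centroids of the points
reproduces the original weighted combination. -/
lemma Phi_rep {E : Type*} [AddCommGroup E] [Module ℝ E] {T : κ → ℝ} (hT : ∀ i, 0 ≤ T i)
    (q : κ → E) :
    ∑ w : {s : Finset κ // s.Nonempty}, Phi T w • ((w.1.card : ℝ)⁻¹ • ∑ i ∈ w.1, q i)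
      = ∑ i, T i • q i := by
  have step1 : ∀ w : {s : Finset κ // s.Nonempty},
      Phi T w • ((w.1.card : ℝ)⁻¹ • ∑ i ∈ w.1, q i)
        = ∑ i ∈ w.1, max (mn w.1 T - mx w.1 T) 0 • q i := by
    intro w
    have hc : (w.1.card : ℝ) ≠ 0 := by simp [Finset.card_ne_zero.2 w.2]
    rw [smul_smul, Phi, ← Finset.smul_sum]
    congr 1
    field_simp
  calc ∑ w : {s : Finset κ // s.Nonempty}, Phi T w • ((w.1.card : ℝ)⁻¹ • ∑ i ∈ w.1, q i)
      = ∑ w : {s : Finset κ // s.Nonempty}, ∑ i ∈ w.1, max (mn w.1 T - mx w.1 T) 0 • q i := by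
        exact Finset.sum_congr rfl fun w _ => step1 w
    _ = ∑ w : {s : Finset κ // s.Nonempty}, ∑ i : κ,
          if i ∈ w.1 then max (mn w.1 T - mx w.1 T) 0 • q i else 0 := by
        refine Finset.sum_congr rfl fun w _ => ?_
        rw [Finset.sum_ite_mem, Finset.univ_inter]
    _ = ∑ i : κ, ∑ w ∈ Finset.univ.filter (fun w : {s : Finset κ // s.Nonempty} => i ∈ w.1),
          max (mn w.1 T - mx w.1 T) 0 • q i := by
        rw [Finset.sum_comm]
        refine Finset.sum_congr rfl fun i _ => ?_
        rw [Finset.sum_filter]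
    _ = ∑ i : κ, T i • q i := by
        refine Finset.sum_congr rfl fun i _ => ?_
        rw [← Finset.sum_smul, sum_posPart_eq (fun j => hT j) i]

lemma Phi_sum {T : κ → ℝ} (hT : ∀ i, 0 ≤ T i) :
    ∑ w : {s : Finset κ // s.Nonempty}, Phi T w = ∑ i, T i := by
  have h := Phi_rep (E := ℝ) hT (fun _ => (1:ℝ))
  simp only [smul_eq_mul, mul_one, Finset.sum_const, nsmul_eq_mul] at h
  rw [← h]
  refine Finset.sum_congr rfl fun w _ => ?_
  rw [inv_mul_cancel₀ (by simp [Finset.card_ne_zero.2 w.2] : ((w.1.card : ℝ)) ≠ 0), mul_one]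

lemma Phi_suppcard {T : κ → ℝ} :
    (Finset.univ.filter (fun w : {s : Finset κ // s.Nonempty} => Phi T w ≠ 0)).card
      ≤ (Finset.univ.filter (fun i => T i ≠ 0)).card := by
  classical
  set K := Finset.univ.filter (fun i => T i ≠ 0) with hK
  have hsub : ∀ w : {s : Finset κ // s.Nonempty}, Phi T w ≠ 0 → w.1 ⊆ K := by
    intro w hw i hi
    simp only [hK, Finset.mem_filter, Finset.mem_univ, true_and]
    exact (Phi_pos_of_mem hw i hi).ne'
  calc (Finset.univ.filter (fun w : {s : Finset κ // s.Nonempty} => Phi T w ≠ 0)).card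
      ≤ (Finset.Icc 1 K.card).card := Finset.card_le_card_of_injOn
        (fun w : {s : Finset κ // s.Nonempty} => w.1.card) ?_ ?_
    _ = K.card := by rw [Nat.card_Icc]; omega
  · intro w hw
    simp only [Finset.mem_coe, Finset.mem_filter, Finset.mem_univ, true_and] at hw
    simp only [Finset.mem_coe, Finset.mem_Icc]
    exact ⟨Finset.card_pos.2 w.2, Finset.card_le_card (hsub w hw)⟩
  · intro w hw w' hw' hcard
    simp only [Finset.coe_filter, Set.mem_setOf_eq] at hw hw'
    rcases Phi_chain hw.2 hw'.2 with h | h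
    · exact Subtype.ext (Finset.eq_of_subset_of_card_le h (le_of_eq hcard.symm))
    · exact Subtype.ext (Finset.eq_of_subset_of_card_le h (le_of_eq hcard)).symm

lemma continuous_fold_max (s : Finset κ) (b : ℝ) :
    Continuous fun T : κ → ℝ => s.fold max b T := by
  classical
  induction s using Finset.cons_induction with
  | empty => simpa using continuous_const
  | cons a s ha ih =>
    simpa [Finset.fold_cons] using (continuous_apply a).max ih

lemma continuous_mn (w : Finset κ) : Continuous fun T : κ → ℝ => mn w T := by
  classical
  rcases w.eq_empty_or_nonempty with rfl | hw
  · simpa [mn] using continuous_const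
  · simp only [mn, dif_pos hw]
    induction hw using Finset.Nonempty.cons_induction with
    | singleton a => simpa using continuous_apply a
    | cons a s ha hs ih =>
      have heq : ∀ T : κ → ℝ, (Finset.cons a s ha).inf' (Finset.cons_nonempty ha) T
          = min (T a) (s.inf' hs T) := fun T => Finset.inf'_cons (H := hs) (hb := ha) (f := T)
      exact continuous_congr (fun T => (heq T).symm) |>.mp ((continuous_apply a).min ih)

lemma continuous_Phi (w : {s : Finset κ // s.Nonempty}) :
    Continuous fun T : κ → ℝ => Phi T w :=
  continuous_const.mul (((continuous_mn w.1).sub (continuous_fold_max _ _)).max continuous_const)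

end WidthProof

namespace WidthProof
set_option linter.unusedSectionVars false

universe u

/-- Iterated index types for barycentric subdivision: level `r+1` indices are nonempty
finsets of level `r` indices. -/
def It (ι : Type u) : ℕ → Type u
  | 0 => ι
  | r+1 => {s : Finset (It ι r) // s.Nonempty}

noncomputable instance itDecEq (ι : Type u) (r : ℕ) : DecidableEq (It ι r) :=
  Classical.decEq _

noncomputable instance itFintype (ι : Type u) [Fintype ι] : ∀ r, Fintype (It ι r)
  | 0 => ‹Fintype ι›
  | r+1 => @Subtype.fintype _ _ (fun s => Finset.decidableNonempty) (@Finset.fintype _ (itFintype ι r))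

variable {E : Type*} [NormedAddCommGroup E] [NormedSpace ℝ E]

/-- Centroid of a finite set of points. -/
noncomputable def cent {β : Type*} (p : β → E) (A : Finset β) : E :=
  (A.card : ℝ)⁻¹ • ∑ u ∈ A, p u

variable {ι : Type*} [Fintype ι]

/-- Iterated points: vertices of the iterated subdivision. -/
noncomputable def itPts (q : ι → E) : ∀ r, It ι r → E
  | 0 => q
  | r+1 => fun w => cent (itPts q r) w.1

/-- Iterated coordinates. -/
noncomputable def itT (t : ι → ℝ) : ∀ r, It ι r → ℝ
  | 0 => t
  | r+1 => Phi (itT t r)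

lemma itT_nonneg {t : ι → ℝ} (ht0 : ∀ i, 0 ≤ t i) : ∀ r w, 0 ≤ itT t r w
  | 0, w => ht0 w
  | r+1, w => Phi_nonneg _ w

lemma itT_sum {t : ι → ℝ} (ht0 : ∀ i, 0 ≤ t i) : ∀ r, ∑ w, itT t r w = ∑ i, t i
  | 0 => rfl
  | r+1 => by
      calc ∑ w : It ι (r+1), itT t (r+1) w
          = ∑ w : {s : Finset (It ι r) // s.Nonempty}, Phi (itT t r) w := rfl
        _ = ∑ i, itT t r i := Phi_sum (itT_nonneg ht0 r)
        _ = ∑ i, t i := itT_sum ht0 r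

lemma itT_suppcard {t : ι → ℝ} : ∀ r,
    (Finset.univ.filter (fun w : It ι r => itT t r w ≠ 0)).card
      ≤ (Finset.univ.filter (fun i : ι => t i ≠ 0)).card
  | 0 => le_rfl
  | r+1 => le_trans Phi_suppcard (itT_suppcard r)

lemma itT_rep (q : ι → E) {t : ι → ℝ} (ht0 : ∀ i, 0 ≤ t i) :
    ∀ r, ∑ w, itT t r w • itPts q r w = ∑ i, t i • q i
  | 0 => rfl
  | r+1 => by
      calc ∑ w : It ι (r+1), itT t (r+1) w • itPts q (r+1) w
          = ∑ w : {s : Finset (It ι r) // s.Nonempty},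
              Phi (itT t r) w • ((w.1.card : ℝ)⁻¹ • ∑ i ∈ w.1, itPts q r i) := rfl
        _ = ∑ i, itT t r i • itPts q r i := Phi_rep (itT_nonneg ht0 r) (itPts q r)
        _ = ∑ i, t i • q i := itT_rep q ht0 r

lemma itT_continuous : ∀ r, Continuous fun t : ι → ℝ => (itT t r : It ι r → ℝ)
  | 0 => continuous_id
  | r+1 => continuous_pi fun w => (continuous_Phi w).comp (itT_continuous r)

end WidthProof

namespace WidthProof
set_option linter.unusedSectionVars false

variable {E : Type*} [NormedAddCommGroup E] [NormedSpace ℝ E]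

lemma norm_cent_sub_cent {β : Type*} (p : β → E) {A B : Finset β}
    (hA : A.Nonempty) (hB : B.Nonempty) {C : ℝ}
    (h : ∀ u ∈ A, ∀ v ∈ B, ‖p u - p v‖ ≤ C) :
    ‖cent p A - cent p B‖ ≤ C := by
  have ha : ((A.card : ℝ)) ≠ 0 := by simp [Finset.card_ne_zero.2 hA]
  have hb : ((B.card : ℝ)) ≠ 0 := by simp [Finset.card_ne_zero.2 hB]
  have key : cent p A - cent p B
      = ((A.card : ℝ) * B.card)⁻¹ • ∑ u ∈ A, ∑ v ∈ B, (p u - p v) := by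
    have hsum : ∑ u ∈ A, ∑ v ∈ B, (p u - p v)
        = (B.card : ℝ) • ∑ u ∈ A, p u - (A.card : ℝ) • ∑ v ∈ B, p v := by
      simp only [Finset.sum_sub_distrib, Finset.sum_const]
      simp only [← Nat.cast_smul_eq_nsmul ℝ, Finset.smul_sum]
    rw [cent, cent, hsum]
    match_scalars <;> field_simp
  rw [key]
  rw [norm_smul]
  have hbound : ‖∑ u ∈ A, ∑ v ∈ B, (p u - p v)‖ ≤ (A.card : ℝ) * B.card * C := by
    calc ‖∑ u ∈ A, ∑ v ∈ B, (p u - p v)‖ ≤ ∑ u ∈ A, ‖∑ v ∈ B, (p u - p v)‖ :=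
          norm_sum_le _ _
      _ ≤ ∑ u ∈ A, ∑ v ∈ B, ‖p u - p v‖ :=
          Finset.sum_le_sum fun u _ => norm_sum_le _ _
      _ ≤ ∑ u ∈ A, ∑ v ∈ B, C :=
          Finset.sum_le_sum fun u hu => Finset.sum_le_sum fun v hv => h u hu v hv
      _ = (A.card : ℝ) * B.card * C := by simp [mul_assoc]
  have hCpos : 0 ≤ C := by
    obtain ⟨u, hu⟩ := hA; obtain ⟨v, hv⟩ := hB
    exact le_trans (norm_nonneg _) (h u hu v hv)
  calc |((A.card : ℝ) * B.card)⁻¹| * ‖∑ u ∈ A, ∑ v ∈ B, (p u - p v)‖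
      ≤ ((A.card : ℝ) * B.card)⁻¹ * ((A.card : ℝ) * B.card * C) := by
        rw [abs_of_nonneg (by positivity)]
        exact mul_le_mul_of_nonneg_left hbound (by positivity)
    _ = C := by field_simp

end WidthProof

namespace WidthProof
set_option linter.unusedSectionVars false

variable {E : Type*} [NormedAddCommGroup E] [NormedSpace ℝ E]

lemma norm_cent_nested {β : Type*} (p : β → E) {A B : Finset β} {n : ℕ}
    (hA : A.Nonempty) (hAB : A ⊆ B) {C : ℝ} (hC : 0 ≤ C)
    (hpair : ∀ u ∈ B, ∀ v ∈ B, ‖p u - p v‖ ≤ C) (hcard : B.card ≤ n + 1) :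
    ‖cent p A - cent p B‖ ≤ ((n : ℝ) / (n + 1)) * C := by
  classical
  rcases eq_or_ne A B with rfl | hne
  · simp only [sub_self, norm_zero]
    positivity
  have hD : (B \ A).Nonempty := by
    rw [Finset.sdiff_nonempty]
    exact fun hBA => hne (Finset.Subset.antisymm hAB hBA)
  set D := B \ A with hDdef
  have hsplit : ∑ u ∈ B, p u = ∑ u ∈ A, p u + ∑ u ∈ D, p u := by
    rw [hDdef, eq_comm, add_comm]
    exact Finset.sum_sdiff hAB
  have hcards : (A.card : ℝ) + D.card = B.card := by
    rw [hDdef]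
    rw [Finset.card_sdiff_of_subset hAB]
    have := Finset.card_le_card hAB
    push_cast [Nat.cast_sub this]
    ring
  have ha : ((A.card : ℝ)) ≠ 0 := by simp [Finset.card_ne_zero.2 hA]
  have hd : ((D.card : ℝ)) ≠ 0 := by simp [Finset.card_ne_zero.2 hD]
  have hb : ((B.card : ℝ)) ≠ 0 := by
    rw [← hcards]; positivity
  have key : cent p A - cent p B = ((D.card : ℝ) / B.card) • (cent p A - cent p D) := by
    rw [cent, cent, cent, hsplit]
    match_scalars
    · field_simp
      linear_combination (-1 : ℝ) * hcards
    · field_simp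
  rw [key, norm_smul]
  have h1 : ‖cent p A - cent p D‖ ≤ C :=
    norm_cent_sub_cent p hA hD fun u hu v hv =>
      hpair u (hAB hu) v (Finset.sdiff_subset hv)
  have hfrac : (D.card : ℝ) / B.card ≤ (n : ℝ) / (n + 1) := by
    have h2 : (1 : ℝ) ≤ A.card := by
      have := Finset.card_pos.2 hA
      exact_mod_cast this
    have h3 : (B.card : ℝ) ≤ n + 1 := by exact_mod_cast hcard
    have h4 : (1 : ℝ) ≤ B.card := by
      have := Finset.card_pos.2 (hA.mono hAB)
      exact_mod_cast this
    rw [div_le_div_iff₀ (by linarith) (by positivity)]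
    nlinarith
  calc |((D.card : ℝ) / B.card)| * ‖cent p A - cent p D‖
      ≤ ((D.card : ℝ) / B.card) * C := by
        rw [abs_of_nonneg (by positivity)]
        exact mul_le_mul_of_nonneg_left h1 (by positivity)
    _ ≤ ((n : ℝ) / (n + 1)) * C := mul_le_mul_of_nonneg_right hfrac hC

variable {ι : Type*} [Fintype ι]

lemma itT_mesh {n : ℕ} (q : ι → E) {D : ℝ} (hD : 0 ≤ D)
    (hq : ∀ i j : ι, ‖q i - q j‖ ≤ D) {t : ι → ℝ} (ht0 : ∀ i, 0 ≤ t i)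
    (htc : (Finset.univ.filter (fun i : ι => t i ≠ 0)).card ≤ n + 1) :
    ∀ r, ∀ w w' : It ι r, itT t r w ≠ 0 → itT t r w' ≠ 0 →
      ‖itPts q r w - itPts q r w'‖ ≤ ((n : ℝ) / (n + 1))^r * D := by
  intro r
  induction r with
  | zero => intro w w' _ _; simpa [itPts] using hq w w'
  | succ r ih =>
    have key : ∀ w w' : It ι (r+1), itT t (r+1) w ≠ 0 → itT t (r+1) w' ≠ 0 →
        w.1 ⊆ w'.1 →
        ‖itPts q (r+1) w - itPts q (r+1) w'‖ ≤ ((n : ℝ) / (n + 1))^(r+1) * D := by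
      intro w w' hw hw' hsub
      have hw'supp : ∀ u ∈ w'.1, itT t r u ≠ 0 :=
        fun u hu => (Phi_pos_of_mem hw' u hu).ne'
      have hcard : w'.1.card ≤ n + 1 := by
        refine le_trans (Finset.card_le_card ?_) (le_trans (itT_suppcard r) htc)
        intro u hu
        simp only [Finset.mem_filter, Finset.mem_univ, true_and]
        exact hw'supp u hu
      have hpair : ∀ u ∈ w'.1, ∀ v ∈ w'.1,
          ‖itPts q r u - itPts q r v‖ ≤ ((n : ℝ) / (n + 1))^r * D :=
        fun u hu v hv => ih u v (hw'supp u hu) (hw'supp v hv)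
      have := norm_cent_nested (itPts q r) w.2 hsub (C := ((n : ℝ) / (n + 1))^r * D)
        (by positivity) hpair hcard
      calc ‖itPts q (r+1) w - itPts q (r+1) w'‖
          = ‖cent (itPts q r) w.1 - cent (itPts q r) w'.1‖ := rfl
        _ ≤ ((n : ℝ) / (n + 1)) * (((n : ℝ) / (n + 1))^r * D) := this
        _ = ((n : ℝ) / (n + 1))^(r+1) * D := by ring
    intro w w' hw hw'
    rcases Phi_chain hw hw' with hsub | hsub
    · exact key w w' hw hw' hsub
    · rw [norm_sub_rev]
      exact key w' w hw' hw hsub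

lemma itT_dist_pt {n : ℕ} (q : ι → E) {D : ℝ} (hD : 0 ≤ D)
    (hq : ∀ i j : ι, ‖q i - q j‖ ≤ D) {t : ι → ℝ} (ht0 : ∀ i, 0 ≤ t i)
    (ht1 : ∑ i, t i = 1)
    (htc : (Finset.univ.filter (fun i : ι => t i ≠ 0)).card ≤ n + 1)
    (r : ℕ) (w : It ι r) (hw : itT t r w ≠ 0) :
    ‖(∑ i, t i • q i) - itPts q r w‖ ≤ ((n : ℝ) / (n + 1))^r * D := by
  have hsum1 : ∑ w', itT t r w' = 1 := by rw [itT_sum ht0 r, ht1]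
  have hrep := itT_rep q ht0 r
  have hx : (∑ i, t i • q i) - itPts q r w
      = ∑ w', itT t r w' • (itPts q r w' - itPts q r w) := by
    simp only [smul_sub, Finset.sum_sub_distrib, ← Finset.sum_smul, hsum1, one_smul, hrep]
  rw [hx]
  calc ‖∑ w', itT t r w' • (itPts q r w' - itPts q r w)‖
      ≤ ∑ w', ‖itT t r w' • (itPts q r w' - itPts q r w)‖ := norm_sum_le _ _
    _ ≤ ∑ w', itT t r w' * (((n : ℝ) / (n + 1))^r * D) := by
        refine Finset.sum_le_sum fun w' _ => ?_
        rw [norm_smul, Real.norm_eq_abs, abs_of_nonneg (itT_nonneg ht0 r w')]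
        rcases eq_or_ne (itT t r w') 0 with h0 | h0
        · simp [h0]
        · exact mul_le_mul_of_nonneg_left
            (itT_mesh q hD hq ht0 htc r w' w h0 hw)
            (itT_nonneg ht0 r w')
    _ = ((n : ℝ) / (n + 1))^r * D := by
        rw [← Finset.sum_mul, hsum1, one_mul]

end WidthProof


namespace WidthProof

variable {X : Type*} [MetricSpace X]

lemma setRadius_le {A : Set X} {x : X} {r : ℝ≥0∞} (h : A ⊆ EMetric.ball x r) :
    setRadius A ≤ r :=
  le_trans (iInf_le _ x) (le_trans (iInf_le _ r) (iInf_le _ h))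

lemma setRadius_mono {A B : Set X} (h : A ⊆ B) : setRadius A ≤ setRadius B := by
  refine le_iInf fun x => le_iInf fun r => le_iInf fun hB => setRadius_le (h.trans hB)

lemma setRadius_empty [Nonempty X] : setRadius (∅ : Set X) = 0 := by
  refine le_antisymm ?_ zero_le
  obtain ⟨x⟩ := ‹Nonempty X›
  exact setRadius_le (x := x) (r := 0) (Set.empty_subset _)

lemma setRadius_lt_dest {A : Set X} {R : ℝ≥0∞} (h : setRadius A < R) :
    ∃ (x : X) (r : ℝ≥0∞), r < R ∧ A ⊆ EMetric.ball x r := by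
  rw [setRadius] at h
  obtain ⟨x, hx⟩ := iInf_lt_iff.1 h
  obtain ⟨r, hr⟩ := iInf_lt_iff.1 hx
  obtain ⟨hsub, hlt⟩ := iInf_lt_iff.1 hr
  exact ⟨x, r, hlt, hsub⟩

lemma width_le {m k : ℕ} {V : Fin k → Set X} (hopen : ∀ i, IsOpen (V i))
    (hcover : ⋃ i, V i = Set.univ)
    (hmult : ∀ x : X, Nat.card {i : Fin k // x ∈ V i} ≤ m + 1) :
    width X m ≤ ⨆ i, setRadius (V i) :=
  le_trans (iInf_le _ k) (le_trans (iInf_le _ V) (le_trans (iInf_le _ hopen)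
    (le_trans (iInf_le _ hcover) (iInf_le _ hmult))))

lemma width_lt_dest {m : ℕ} {R : ℝ≥0∞} (h : width X m < R) :
    ∃ (k : ℕ) (V : Fin k → Set X), (∀ i, IsOpen (V i)) ∧ (⋃ i, V i = Set.univ) ∧
      (∀ x : X, Nat.card {i : Fin k // x ∈ V i} ≤ m + 1) ∧
      (⨆ i, setRadius (V i)) < R := by
  rw [width] at h
  obtain ⟨k, hk⟩ := iInf_lt_iff.1 h
  obtain ⟨V, hV⟩ := iInf_lt_iff.1 hk
  obtain ⟨h1, hV⟩ := iInf_lt_iff.1 hV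
  obtain ⟨h2, hV⟩ := iInf_lt_iff.1 hV
  obtain ⟨h3, hV⟩ := iInf_lt_iff.1 hV
  exact ⟨k, V, h1, h2, h3, hV⟩

end WidthProof

namespace WidthProof
set_option linter.unusedSectionVars false
set_option maxHeartbeats 1000000

theorem forward_exists {X : Type*} [MetricSpace X] [CompactSpace X] [Nonempty X]
    (n : ℕ) (R : ℝ≥0∞) (hR : 0 < R) (h : width X n < R) :
    ∃ (m : ℕ) (N : SimplicialComplex ℝ (EuclideanSpace ℝ (Fin m))),
      N.faces.Finite ∧ (∀ s ∈ N.faces, s.card ≤ n + 1) ∧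
      ∃ ψ : C(X, N.space), ∀ y : N.space, setRadius (⇑ψ ⁻¹' {y}) < R := by
  classical
  obtain ⟨k, V, hopen, hcover, hmult, hsup⟩ := width_lt_dest h
  have hmult' : ∀ x : X, (Finset.univ.filter (fun i : Fin k => x ∈ V i)).card ≤ n + 1 := by
    intro x
    have := hmult x
    rwa [Nat.card_eq_fintype_card, Fintype.card_subtype] at this
  set E := EuclideanSpace ℝ (Fin k) with hE
  set bvec : Fin k → E := fun i => EuclideanSpace.single i (1:ℝ) with hbvec
  have hcoord : ∀ (s : Finset (Fin k)) (c : Fin k → ℝ) (j : Fin k),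
      (∑ i ∈ s, c i • bvec i) j = if j ∈ s then c j else 0 := by
    intro s c j
    induction s using Finset.cons_induction with
    | empty => simp
    | cons a s ha ih =>
      rw [Finset.sum_cons]
      have : (c a • bvec a + ∑ i ∈ s, c i • bvec i) j
          = c a * (bvec a j) + (∑ i ∈ s, c i • bvec i) j := rfl
      rw [this, ih, hbvec]
      simp only [EuclideanSpace.single_apply]
      by_cases hj : j = a
      · subst hj; simp [ha]
      · simp [hj, Finset.mem_cons]
  have hinj : Function.Injective bvec := by
    intro i i' hii
    by_contra hne
    have h1 : bvec i' i = 0 := by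
      rw [hbvec]; simp only [EuclideanSpace.single_apply, if_neg hne]
    have h2 : bvec i i = 1 := by
      rw [hbvec]; simp [EuclideanSpace.single_apply]
    rw [hii] at h2
    rw [h1] at h2
    norm_num at h2
  have hai : AffineIndependent ℝ bvec := by
    rw [affineIndependent_iff]
    intro s w hw0 hcomb e he
    have h1 : (∑ i ∈ s, w i • bvec i) e = 0 := by rw [hcomb]; rfl
    rwa [hcoord s w e, if_pos he] at h1
  have hrange : AffineIndependent ℝ ((↑) : Set.range bvec → E) := hai.range
  -- the nerve complex
  set faces : Set (Finset E) :=
    {F | ∃ s : Finset (Fin k), s.Nonempty ∧ (∃ x : X, ∀ i ∈ s, x ∈ V i) ∧ F = s.image bvec}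
    with hfaces
  have hsubrange : ∀ s : Finset (Fin k), (↑(s.image bvec) : Set E) ⊆ Set.range bvec := by
    intro s y hy
    simp only [Finset.coe_image, Set.mem_image, Finset.mem_coe] at hy
    obtain ⟨i, -, rfl⟩ := hy
    exact ⟨i, rfl⟩
  set N : SimplicialComplex ℝ E :=
    { faces := faces
      indep := by
        rintro F ⟨s, -, -, rfl⟩
        exact hrange.mono (hsubrange s)
      isRelLowerSet_faces := by
        rintro F ⟨s, hs, ⟨x, hx⟩, rfl⟩
        refine ⟨hs.image bvec, ?_⟩
        intro t hts htne
        have ht : t ≠ ∅ := htne.ne_empty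
        refine ⟨s.filter (fun i => bvec i ∈ t), ?_, ⟨x, ?_⟩, ?_⟩
        · obtain ⟨y, hy⟩ := Finset.nonempty_iff_ne_empty.2 ht
          obtain ⟨i, hi, rfl⟩ := Finset.mem_image.1 (hts hy)
          exact ⟨i, Finset.mem_filter.2 ⟨hi, hy⟩⟩
        · intro i hi
          exact hx i (Finset.mem_filter.1 hi).1
        · ext y
          simp only [Finset.mem_image, Finset.mem_filter]
          constructor
          · intro hy
            obtain ⟨i, hi, rfl⟩ := Finset.mem_image.1 (hts hy)
            exact ⟨i, ⟨hi, hy⟩, rfl⟩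
          · rintro ⟨i, ⟨-, hi⟩, rfl⟩
            exact hi
      inter_subset_convexHull := by
        rintro F F' ⟨s, -, -, rfl⟩ ⟨s', -, -, rfl⟩
        have heq := AffineIndependent.convexHull_inter (R := ℝ) (s := Finset.univ.image bvec)
          (t₁ := s.image bvec) (t₂ := s'.image bvec) ?_ ?_ ?_
        · exact heq.symm.le
        · refine hrange.mono ?_
          exact hsubrange Finset.univ
        · exact Finset.image_subset_image (Finset.subset_univ s)
        · exact Finset.image_subset_image (Finset.subset_univ s') }
    with hN
  refine ⟨k, N, ?_, ?_, ?_⟩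
  · refine Set.Finite.subset (Set.finite_range (fun s : Finset (Fin k) => s.image bvec)) ?_
    rintro F ⟨s, -, -, rfl⟩
    exact ⟨s, rfl⟩
  · rintro F ⟨s, -, ⟨x, hx⟩, rfl⟩
    calc (s.image bvec).card = s.card := Finset.card_image_of_injective s hinj
      _ ≤ (Finset.univ.filter (fun i : Fin k => x ∈ V i)).card := by
          refine Finset.card_le_card fun i hi => ?_
          simp only [Finset.mem_filter, Finset.mem_univ, true_and]
          exact hx i hi
      _ ≤ n + 1 := hmult' x
  -- the map
  set g : Fin k → X → ℝ := fun i x => if V i = Set.univ then 1 else Metric.infDist x (V i)ᶜ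
    with hg
  have hgcont : ∀ i, Continuous (g i) := by
    intro i
    rw [hg]
    by_cases hVi : V i = Set.univ
    · simp only [hVi, if_true]
      exact continuous_const
    · simp only [hVi, if_false]
      exact Metric.continuous_infDist_pt _
  have hgnonneg : ∀ i x, 0 ≤ g i x := by
    intro i x
    rw [hg]
    by_cases hVi : V i = Set.univ
    · simp [hVi]
    · simp only [hVi, if_false]
      exact Metric.infDist_nonneg
  have hgpos : ∀ i x, x ∈ V i ↔ 0 < g i x := by
    intro i x
    rw [hg]
    by_cases hVi : V i = Set.univ
    · simp [hVi]
    · simp only [hVi, if_false]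
      have hcl : IsClosed (V i)ᶜ := (hopen i).isClosed_compl
      have hne : (V i)ᶜ.Nonempty := Set.nonempty_compl.2 hVi
      rw [← hcl.notMem_iff_infDist_pos hne]
      simp
  set S : X → ℝ := fun x => ∑ i, g i x with hS
  have hScont : Continuous S := continuous_finset_sum _ fun i _ => hgcont i
  have hSpos : ∀ x, 0 < S x := by
    intro x
    have hx : x ∈ ⋃ i, V i := by rw [hcover]; trivial
    obtain ⟨i, hi⟩ := Set.mem_iUnion.1 hx
    exact Finset.sum_pos' (fun j _ => hgnonneg j x) ⟨i, Finset.mem_univ i, (hgpos i x).1 hi⟩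
  set φ : Fin k → X → ℝ := fun i x => g i x / S x with hφ
  have hφnonneg : ∀ i x, 0 ≤ φ i x := fun i x => div_nonneg (hgnonneg i x) (hSpos x).le
  have hφsum : ∀ x, ∑ i, φ i x = 1 := by
    intro x
    rw [hφ]
    rw [← Finset.sum_div]
    exact div_self (hSpos x).ne'
  have hφpos : ∀ i x, x ∈ V i ↔ 0 < φ i x := by
    intro i x
    rw [hφ, hgpos]
    constructor
    · intro h'; exact div_pos h' (hSpos x)
    · intro h'; exact (div_pos_iff.1 h').elim (fun h'' => h''.1)
        (fun h'' => absurd h''.2 (not_lt.2 (hSpos x).le))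
  set ψ0 : X → E := fun x => ∑ i, φ i x • bvec i with hψ0
  have hψ0cont : Continuous ψ0 :=
    continuous_finset_sum _ fun i _ =>
      ((hgcont i).div hScont fun x => (hSpos x).ne').smul continuous_const
  have hmem : ∀ x, ψ0 x ∈ N.space := by
    intro x
    set sx : Finset (Fin k) := Finset.univ.filter (fun i => 0 < g i x) with hsx
    have hsxne : sx.Nonempty := by
      have hx : x ∈ ⋃ i, V i := by rw [hcover]; trivial
      obtain ⟨i, hi⟩ := Set.mem_iUnion.1 hx
      exact ⟨i, by simp [hsx, (hgpos i x).1 hi]⟩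
    have hface : sx.image bvec ∈ N.faces := by
      refine ⟨sx, hsxne, ⟨x, fun i hi => ?_⟩, rfl⟩
      rw [hgpos]
      exact (Finset.mem_filter.1 hi).2
    have hrestrict : ψ0 x = ∑ i ∈ sx, φ i x • bvec i := by
      rw [hψ0]
      refine (Finset.sum_subset (Finset.subset_univ sx) fun i _ hi => ?_).symm
      have : g i x = 0 := by
        rcases (hgnonneg i x).eq_or_lt with h' | h'
        · exact h'.symm
        · exact absurd (Finset.mem_filter.2 ⟨Finset.mem_univ i, h'⟩) hi
      simp [hφ, this]
    have hsum1 : ∑ i ∈ sx, φ i x = 1 := by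
      rw [← hφsum x]
      exact Finset.sum_subset (Finset.subset_univ sx) fun i _ hi => by
        have : g i x = 0 := by
          rcases (hgnonneg i x).eq_or_lt with h' | h'
          · exact h'.symm
          · exact absurd (Finset.mem_filter.2 ⟨Finset.mem_univ i, h'⟩) hi
        simp [hφ, this]
    have : ψ0 x ∈ convexHull ℝ (↑(sx.image bvec) : Set E) := by
      rw [hrestrict, ← Finset.centerMass_eq_of_sum_1 _ bvec hsum1]
      exact Finset.centerMass_mem_convexHull _ (fun i hi => hφnonneg i x)
        (hsum1 ▸ one_pos) (fun i hi => Finset.mem_coe.2 (Finset.mem_image_of_mem bvec hi))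
    exact Set.mem_biUnion hface this
  set ψ : C(X, N.space) := ⟨fun x => ⟨ψ0 x, hmem x⟩, hψ0cont.subtype_mk _⟩ with hψ
  refine ⟨ψ, fun y => ?_⟩
  rcases Set.eq_empty_or_nonempty (⇑ψ ⁻¹' {y}) with hA | ⟨x₀, hx₀⟩
  · rw [hA, setRadius_empty]
    exact hR
  · have hx₀' : ψ x₀ = y := hx₀
    have hx : x₀ ∈ ⋃ i, V i := by rw [hcover]; trivial
    obtain ⟨i₀, hi₀⟩ := Set.mem_iUnion.1 hx
    have hsub : (⇑ψ ⁻¹' {y}) ⊆ V i₀ := by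
      intro x hx'
      have hψeq : ψ0 x = ψ0 x₀ := by
        have : ψ x = ψ x₀ := by
          rw [hx₀']
          exact hx'
        exact congrArg Subtype.val this
      have hc : φ i₀ x = φ i₀ x₀ := by
        have h1 : (ψ0 x) i₀ = (ψ0 x₀) i₀ := by rw [hψeq]
        have h2 : ∀ z, (ψ0 z) i₀ = φ i₀ z := by
          intro z
          rw [hψ0]
          have := hcoord Finset.univ (fun i => φ i z) i₀
          simpa using this
        rwa [h2, h2] at h1
      rw [hφpos]
      rw [hc]
      rw [← hφpos]
      exact hi₀
    calc setRadius (⇑ψ ⁻¹' {y}) ≤ setRadius (V i₀) := setRadius_mono hsub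
      _ ≤ ⨆ i, setRadius (V i) := le_iSup (fun i => setRadius (V i)) i₀
      _ < R := hsup

end WidthProof

namespace WidthProof
set_option linter.unusedSectionVars false
set_option maxHeartbeats 1600000

theorem converse_width_lt {X : Type*} [MetricSpace X] [CompactSpace X] [Nonempty X]
    (n : ℕ) (R : ℝ≥0∞) (hR : 0 < R) (m : ℕ)
    (N : SimplicialComplex ℝ (EuclideanSpace ℝ (Fin m)))
    (hfin : N.faces.Finite) (hcard : ∀ s ∈ N.faces, s.card ≤ n + 1)
    (ψ : C(X, N.space)) (hψ : ∀ y : N.space, setRadius (⇑ψ ⁻¹' {y}) < R) :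
    width X n < R := by
  classical
  set E := EuclideanSpace ℝ (Fin m) with hE
  set P : Finset E := hfin.toFinset.biUnion id with hPdef
  have hP : ∀ s ∈ N.faces, s ⊆ P := by
    intro s hs y hy
    rw [hPdef]
    exact Finset.mem_biUnion.2 ⟨s, hfin.mem_toFinset.2 hs, hy⟩
  set ι := {y : E // y ∈ P} with hι
  set q : ι → E := fun i => (i : E) with hq
  set e0 : (ι → ℝ) → E := fun t => ∑ i, t i • q i with he0
  set M : Set (ι → ℝ) :=
    {t | (∀ i, 0 ≤ t i) ∧ (∑ i, t i = 1) ∧ ∃ s ∈ N.faces, ∀ i, t i ≠ 0 → (i : E) ∈ s}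
    with hM
  have hsum_coe : ∀ (f : E → ℝ), ∑ i : ι, f (i : E) = ∑ y ∈ P, f y := fun f =>
    Finset.sum_coe_sort P f
  have hsum_coeE : ∀ (f : E → E), ∑ i : ι, f (i : E) = ∑ y ∈ P, f y := fun f =>
    Finset.sum_coe_sort P f
  -- membership of `e0 t` in the convex hull of a supporting face
  have hmemhull : ∀ t ∈ M, ∀ s ∈ N.faces, (∀ i : ι, t i ≠ 0 → (i : E) ∈ s) →
      e0 t ∈ convexHull ℝ (↑s : Set E) := by
    intro t ht s hs hsupp
    set w : E → ℝ := fun y => if h : y ∈ P then t ⟨y, h⟩ else 0 with hw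
    have hzero : ∀ y ∈ P, y ∉ s → w y = 0 := by
      intro y hyP hys
      rw [hw]; simp only []
      rw [dif_pos hyP]
      by_contra h0
      exact hys (hsupp ⟨y, hyP⟩ h0)
    refine Finset.mem_convexHull'.2 ⟨w, ?_, ?_, ?_⟩
    · intro y hy
      have hyP := hP s hs hy
      rw [hw]; simp only []
      rw [dif_pos hyP]
      exact ht.1 _
    · have h1 : ∑ y ∈ P, w y = 1 := by
        rw [← hsum_coe w]
        calc ∑ i : ι, w (i : E) = ∑ i : ι, t i :=
              Finset.sum_congr rfl fun i _ => dif_pos i.2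
          _ = 1 := ht.2.1
      exact (Finset.sum_subset (hP s hs) hzero).trans h1
    · have h2 : ∑ y ∈ P, w y • y = e0 t := by
        rw [show (∑ y ∈ P, w y • y) = ∑ y ∈ P, (fun z => w z • z) y from rfl,
          ← hsum_coeE (fun z => w z • z)]
        refine Finset.sum_congr rfl fun i _ => ?_
        show w (i : E) • (i : E) = t i • q i
        rw [show w (i : E) = t i from dif_pos i.2]
      refine Eq.trans ?_ h2
      exact Finset.sum_subset (hP s hs) fun y hyP hys => by rw [hzero y hyP hys, zero_smul]
  have hmemsp : ∀ t ∈ M, e0 t ∈ N.space := by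
    intro t ht
    obtain ⟨s, hs, hsupp⟩ := ht.2.2
    exact N.convexHull_subset_space hs (hmemhull t ht s hs hsupp)
  -- injectivity of `e0` on `M`
  have hinjM : ∀ t ∈ M, ∀ t' ∈ M, e0 t = e0 t' → t = t' := by
    intro t ht t' ht' heq
    obtain ⟨s, hs, hsupp⟩ := ht.2.2
    obtain ⟨s', hs', hsupp'⟩ := ht'.2.2
    have hx : e0 t ∈ convexHull ℝ (↑(s ∩ s') : Set E) := by
      rw [Finset.coe_inter]
      refine N.inter_subset_convexHull hs hs' ⟨hmemhull t ht s hs hsupp, ?_⟩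
      rw [heq]
      exact hmemhull t' ht' s' hs' hsupp'
    obtain ⟨w'', hw''0, hw''1, hw''x⟩ := Finset.mem_convexHull'.1 hx
    set wex : E → ℝ := fun y => if y ∈ s ∩ s' then w'' y else 0 with hwex
    set wt : E → ℝ := fun y => if h : y ∈ P then t ⟨y, h⟩ else 0 with hwt
    set wt' : E → ℝ := fun y => if h : y ∈ P then t' ⟨y, h⟩ else 0 with hwt'
    -- generic claim: weights of `u` on a supporting face `σ ⊇ s ∩ s'` agree with `wex`
    have main : ∀ (u : ι → ℝ), u ∈ M → ∀ (σ : Finset E), σ ∈ N.faces →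
        (∀ i : ι, u i ≠ 0 → (i : E) ∈ σ) → s ∩ s' ⊆ σ → e0 u = e0 t →
        ∀ y ∈ σ, (if h : y ∈ P then u ⟨y, h⟩ else 0) = wex y := by
      intro u hu σ hσ hsuppu hss hxeq
      have hzero : ∀ y ∈ P, y ∉ σ → (if h : y ∈ P then u ⟨y, h⟩ else 0) = 0 := by
        intro y hyP hys
        rw [dif_pos hyP]
        by_contra h0
        exact hys (hsuppu ⟨y, hyP⟩ h0)
      have hsum_u : ∑ y ∈ σ, (if h : y ∈ P then u ⟨y, h⟩ else 0) = 1 := by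
        refine (Finset.sum_subset (hP σ hσ) hzero).trans ?_
        rw [← hsum_coe (fun y => if h : y ∈ P then u ⟨y, h⟩ else 0)]
        calc ∑ i : ι, (if h : (i:E) ∈ P then u ⟨(i:E), h⟩ else 0) = ∑ i : ι, u i :=
              Finset.sum_congr rfl fun i _ => dif_pos i.2
          _ = 1 := hu.2.1
      have hvec_u : ∑ y ∈ σ, (if h : y ∈ P then u ⟨y, h⟩ else 0) • y = e0 u := by
        refine (Finset.sum_subset (f := fun y => (if h : y ∈ P then u ⟨y, h⟩ else 0) • y)
          (hP σ hσ) fun y hyP hys =>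
          (show ((if h : y ∈ P then u ⟨y, h⟩ else 0) • y) = 0 by
            rw [hzero y hyP hys, zero_smul])).trans ?_
        rw [show (∑ y ∈ P, (if h : y ∈ P then u ⟨y, h⟩ else 0) • y)
            = ∑ y ∈ P, (fun z => (if h : z ∈ P then u ⟨z, h⟩ else 0) • z) y from rfl,
          ← hsum_coeE (fun z => (if h : z ∈ P then u ⟨z, h⟩ else 0) • z)]
        refine Finset.sum_congr rfl fun i _ => ?_
        show (if h : (i:E) ∈ P then u ⟨(i:E), h⟩ else 0) • (i : E) = u i • q i
        rw [show (if h : (i:E) ∈ P then u ⟨(i:E), h⟩ else 0) = u i from dif_pos i.2]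
      have hinter : σ ∩ (s ∩ s') = s ∩ s' := Finset.inter_eq_right.2 hss
      have hsum_w : ∑ y ∈ σ, wex y = 1 := by
        rw [hwex]
        rw [Finset.sum_ite_mem, hinter, hw''1]
      have hvec_w : ∑ y ∈ σ, wex y • y = e0 t := by
        rw [hwex]
        have : ∀ y, (if y ∈ s ∩ s' then w'' y else 0) • y
            = (if y ∈ s ∩ s' then w'' y • y else 0) := by
          intro y
          by_cases hy : y ∈ s ∩ s' <;> simp [hy]
        simp only [this]
        rw [Finset.sum_ite_mem, hinter, hw''x]
      exact fun y hy => AffineIndependent.eq_of_sum_eq_sum_subtype (N.indep hσ)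
        (hsum_u.trans hsum_w.symm) (by rw [hvec_u, hvec_w, hxeq]) y hy
    have hts := main t ht s hs hsupp Finset.inter_subset_left rfl
    have hts' := main t' ht' s' hs' hsupp' Finset.inter_subset_right heq.symm
    funext i
    have hwtt : (if h : (i:E) ∈ P then t ⟨(i:E), h⟩ else 0) = t i := dif_pos i.2
    have hwtt' : (if h : (i:E) ∈ P then t' ⟨(i:E), h⟩ else 0) = t' i := dif_pos i.2
    by_cases his : (i : E) ∈ s <;> by_cases his' : (i : E) ∈ s'
    · have h1 := hts _ his
      have h2 := hts' _ his'
      rw [hwtt] at h1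
      rw [hwtt'] at h2
      rw [h1, h2]
    · have h1 := hts _ his
      rw [hwtt] at h1
      have h2 : t' i = 0 := by
        by_contra h0
        exact his' (hsupp' i h0)
      rw [h1, h2, hwex]
      simp [Finset.mem_inter, his']
    · have h2 := hts' _ his'
      rw [hwtt'] at h2
      have h1 : t i = 0 := by
        by_contra h0
        exact his (hsupp i h0)
      rw [h1, h2, hwex]
      simp [Finset.mem_inter, his]
    · have h1 : t i = 0 := by
        by_contra h0
        exact his (hsupp i h0)
      have h2 : t' i = 0 := by
        by_contra h0
        exact his' (hsupp' i h0)
      rw [h1, h2]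
  -- compactness of the coordinate domain
  have hMsub : M ⊆ Set.Icc (fun _ => (0:ℝ)) (fun _ => 1) := by
    intro t ht
    constructor
    · intro i; exact ht.1 i
    · intro i
      calc t i ≤ ∑ j, t j :=
            Finset.single_le_sum (fun j _ => ht.1 j) (Finset.mem_univ i)
        _ = 1 := ht.2.1
  have hMclosed : IsClosed M := by
    have hMeq : M = ⋃ s ∈ hfin.toFinset,
        {t : ι → ℝ | (∀ i, 0 ≤ t i) ∧ (∑ i, t i = 1) ∧ ∀ i : ι, t i ≠ 0 → (i : E) ∈ s} := by
      ext t
      simp only [hM, Set.mem_setOf_eq, Set.mem_iUnion, hfin.mem_toFinset, exists_prop]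
      constructor
      · rintro ⟨h1, h2, s, hs, h3⟩; exact ⟨s, hs, h1, h2, h3⟩
      · rintro ⟨s, hs, h1, h2, h3⟩; exact ⟨h1, h2, s, hs, h3⟩
    rw [hMeq]
    refine Set.Finite.isClosed_biUnion (hfin.toFinset.finite_toSet) fun s _ => ?_
    refine IsClosed.inter ?_ (IsClosed.inter ?_ ?_)
    · show IsClosed {t : ι → ℝ | ∀ i, 0 ≤ t i}
      have : {t : ι → ℝ | ∀ i, 0 ≤ t i} = ⋂ i, {t : ι → ℝ | 0 ≤ t i} := by
        ext; simp [Set.mem_iInter]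
      rw [this]
      exact isClosed_iInter fun i => isClosed_le continuous_const (continuous_apply i)
    · exact isClosed_eq (continuous_finset_sum _ fun i _ => continuous_apply i)
        continuous_const
    · show IsClosed {t : ι → ℝ | ∀ i : ι, t i ≠ 0 → (i : E) ∈ s}
      have : {t : ι → ℝ | ∀ i : ι, t i ≠ 0 → (i : E) ∈ s}
          = ⋂ i : ι, {t : ι → ℝ | t i ≠ 0 → (i : E) ∈ s} := by
        ext; simp [Set.mem_iInter]
      rw [this]
      refine isClosed_iInter fun i => ?_
      by_cases his : (i : E) ∈ s
      · have : {t : ι → ℝ | t i ≠ 0 → (i : E) ∈ s} = Set.univ := by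
          ext; simp [his]
        rw [this]; exact isClosed_univ
      · have : {t : ι → ℝ | t i ≠ 0 → (i : E) ∈ s} = {t : ι → ℝ | t i = 0} := by
          ext u
          simp only [Set.mem_setOf_eq]
          constructor
          · intro h'
            by_contra h0
            exact his (h' h0)
          · intro h' h0
            exact absurd h' h0
        rw [this]
        exact isClosed_eq (continuous_apply i) continuous_const
  have hMcpt : IsCompact M := (isCompact_Icc).of_isClosed_subset hMclosed hMsub
  -- surjectivity
  have hsurj : ∀ y : E, y ∈ N.space → ∃ t ∈ M, e0 t = y := by
    intro y hy
    obtain ⟨s, hs, hyhull⟩ := SimplicialComplex.mem_space_iff.1 hy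
    obtain ⟨w, hw0, hw1, hwx⟩ := Finset.mem_convexHull'.1 hyhull
    set wE : E → ℝ := fun z => if z ∈ s then w z else 0 with hwE
    set t : ι → ℝ := fun i => wE (i : E) with ht
    have hPs : P ∩ s = s := Finset.inter_eq_right.2 (hP s hs)
    refine ⟨t, ⟨?_, ?_, s, hs, ?_⟩, ?_⟩
    · intro i
      rw [ht, hwE]; simp only []
      by_cases his : (i : E) ∈ s
      · rw [if_pos his]; exact hw0 _ his
      · rw [if_neg his]
    · rw [ht]
      rw [hsum_coe wE, hwE]
      simp only []
      rw [Finset.sum_ite_mem, hPs, hw1]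
    · intro i h0
      by_contra his
      rw [ht, hwE] at h0
      simp only [if_neg his] at h0
      exact h0 rfl
    · rw [he0]
      simp only []
      calc ∑ i : ι, t i • q i = ∑ z ∈ P, wE z • z := hsum_coeE (fun z => wE z • z)
        _ = ∑ z ∈ P, (if z ∈ s then w z • z else 0) := by
            refine Finset.sum_congr rfl fun z _ => ?_
            rw [hwE]; simp only []
            by_cases hz : z ∈ s <;> simp [hz]
        _ = ∑ z ∈ P ∩ s, w z • z := Finset.sum_ite_mem _ _ _
        _ = y := by rw [hPs, hwx]
  -- the homeomorphism between coordinates and the space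
  have he0cont : Continuous e0 := by
    rw [he0]
    exact continuous_finset_sum _ fun i _ => (continuous_apply i).smul continuous_const
  haveI : CompactSpace M := isCompact_iff_compactSpace.1 hMcpt
  set eqv : M ≃ N.space := Equiv.ofBijective
    (fun t => (⟨e0 t.1, hmemsp t.1 t.2⟩ : N.space))
    ⟨fun a b hab => Subtype.ext (hinjM a.1 a.2 b.1 b.2 (congrArg Subtype.val hab)),
      fun y => by
        obtain ⟨t, ht, het⟩ := hsurj y.1 y.2
        exact ⟨⟨t, ht⟩, Subtype.ext het⟩⟩ with heqv
  have heqvcont : Continuous eqv := by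
    rw [heqv]
    exact Continuous.subtype_mk (he0cont.comp continuous_subtype_val) _
  set homeo : M ≃ₜ N.space := heqvcont.homeoOfEquivCompactToT2 with hhomeo
  haveI : CompactSpace N.space := homeo.compactSpace
  set tx : X → (ι → ℝ) := fun x => (homeo.symm (ψ x) : M).1 with htx
  have htxM : ∀ x, tx x ∈ M := fun x => (homeo.symm (ψ x)).2
  have htxcont : Continuous tx :=
    continuous_subtype_val.comp (homeo.symm.continuous.comp ψ.continuous)
  have hval : ∀ x, ((ψ x : N.space) : E) = e0 (tx x) := by
    intro x
    have h1 : homeo (homeo.symm (ψ x)) = ψ x := homeo.apply_symm_apply _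
    have h2 := congrArg Subtype.val h1
    exact h2.symm
  have htxcard : ∀ x, (Finset.univ.filter (fun i : ι => tx x i ≠ 0)).card ≤ n + 1 := by
    intro x
    obtain ⟨s, hs, hsupp⟩ := (htxM x).2.2
    calc (Finset.univ.filter (fun i : ι => tx x i ≠ 0)).card ≤ s.card := by
          refine Finset.card_le_card_of_injOn (fun i => (i : E)) ?_ ?_
          · intro i hi
            simp only [Finset.mem_coe, Finset.mem_filter, Finset.mem_univ, true_and] at hi
            exact hsupp i hi
          · intro a _ b _ hab
            exact Subtype.ext hab
      _ ≤ n + 1 := hcard s hs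
  -- diameter bound
  set D := Metric.diam (↑P : Set E) with hD
  have hD0 : 0 ≤ D := Metric.diam_nonneg
  have hqD : ∀ i j : ι, ‖q i - q j‖ ≤ D := by
    intro i j
    rw [← dist_eq_norm]
    exact Metric.dist_le_diam_of_mem (P.finite_toSet.isBounded) i.2 j.2
  -- small neighborhoods of fibers
  have hnbhd : ∀ y : N.space, ∃ U : Set N.space, IsOpen U ∧ y ∈ U ∧
      ∃ (x : X) (r : ℝ≥0∞), r < R ∧ ⇑ψ ⁻¹' U ⊆ EMetric.ball x r := by
    intro y
    obtain ⟨x, r, hrR, hsub⟩ := setRadius_lt_dest (hψ y)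
    obtain ⟨r', hrr', hr'R⟩ := exists_between hrR
    set A : Set X := (EMetric.ball x r')ᶜ with hA
    have hAcl : IsClosed A := EMetric.isOpen_ball.isClosed_compl
    have hAcpt : IsCompact A := hAcl.isCompact
    have himcl : IsClosed (⇑ψ '' A) := (hAcpt.image ψ.continuous).isClosed
    refine ⟨(⇑ψ '' A)ᶜ, himcl.isOpen_compl, ?_, x, r', hr'R, ?_⟩
    · rintro ⟨a, haA, haeq⟩
      have : a ∈ ⇑ψ ⁻¹' {y} := by simp [haeq]
      exact haA (EMetric.ball_subset_ball hrr'.le (hsub this))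
    · intro z hz
      by_contra hz'
      exact hz (Set.mem_image_of_mem _ hz')
  choose U hUopen hUmem xc rc hrcR hUsub using hnbhd
  obtain ⟨δ, hδ0, hδ⟩ := lebesgue_number_lemma_of_metric
    (isCompact_univ (X := N.space)) hUopen
    (fun z _ => Set.mem_iUnion.2 ⟨z, hUmem z⟩)
  -- choosing the subdivision depth
  have hfrac0 : (0:ℝ) ≤ (n:ℝ)/(n+1) := by positivity
  have hfrac1 : (n:ℝ)/(n+1) < 1 := by
    rw [div_lt_one (by positivity)]
    linarith
  obtain ⟨r₀, hr₀⟩ := ((tendsto_pow_atTop_nhds_zero_of_lt_one hfrac0 hfrac1).eventually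
    (gt_mem_nhds (show (0:ℝ) < δ / (2*(D+1)) by positivity))).exists
  have hpow0 : (0:ℝ) ≤ ((n:ℝ)/(n+1))^r₀ := pow_nonneg hfrac0 r₀
  have hsmall : 2 * (((n:ℝ)/(n+1))^r₀ * D) < δ := by
    have h1 : ((n:ℝ)/(n+1))^r₀ * D ≤ ((n:ℝ)/(n+1))^r₀ * (D+1) :=
      mul_le_mul_of_nonneg_left (by linarith) hpow0
    have h2 : ((n:ℝ)/(n+1))^r₀ * (D+1) < (δ / (2*(D+1))) * (D+1) :=
      mul_lt_mul_of_pos_right hr₀ (by linarith)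
    have h3 : (δ / (2*(D+1))) * (D+1) = δ / 2 := by
      field_simp
    linarith
  -- the cover
  set V : It ι r₀ → Set X := fun w => {x | itT (tx x) r₀ w ≠ 0} with hV
  have hVopen : ∀ w, IsOpen (V w) := by
    intro w
    have hcont : Continuous fun x => itT (tx x) r₀ w :=
      (continuous_apply w).comp ((itT_continuous r₀).comp htxcont)
    exact isOpen_compl_singleton.preimage hcont
  have hVcover : ⋃ w, V w = Set.univ := by
    ext x
    simp only [Set.mem_iUnion, Set.mem_univ, iff_true, hV, Set.mem_setOf_eq]
    by_contra hall
    push_neg at hall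
    have : ∑ w, itT (tx x) r₀ w = 0 := Finset.sum_eq_zero fun w _ => hall w
    rw [itT_sum (htxM x).1 r₀, (htxM x).2.1] at this
    norm_num at this
  have hVmult : ∀ x, (Finset.univ.filter (fun w : It ι r₀ => x ∈ V w)).card ≤ n + 1 := by
    intro x
    have : (Finset.univ.filter (fun w : It ι r₀ => x ∈ V w))
        = (Finset.univ.filter (fun w : It ι r₀ => itT (tx x) r₀ w ≠ 0)) := rfl
    rw [this]
    exact le_trans (itT_suppcard r₀) (htxcard x)
  have hVrad : ∀ w, setRadius (V w) < R := by
    intro w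
    rcases Set.eq_empty_or_nonempty (V w) with hVw | ⟨x₁, hx₁⟩
    · rw [hVw, setRadius_empty]
      exact hR
    · obtain ⟨y, hbally⟩ := hδ (ψ x₁) trivial
      have hVsub : V w ⊆ ⇑ψ ⁻¹' (U y) := by
        intro x hx
        have hdist : dist (ψ x) (ψ x₁) < δ := by
          rw [Subtype.dist_eq, dist_eq_norm, hval x, hval x₁]
          have h1 := itT_dist_pt q hD0 hqD (htxM x).1 (htxM x).2.1 (htxcard x) r₀ w hx
          have h2 := itT_dist_pt q hD0 hqD (htxM x₁).1 (htxM x₁).2.1 (htxcard x₁) r₀ w hx₁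
          have hsplit : e0 (tx x) - e0 (tx x₁)
              = ((∑ i, tx x i • q i) - itPts q r₀ w)
                - ((∑ i, tx x₁ i • q i) - itPts q r₀ w) := by
            rw [he0]
            abel
          rw [hsplit]
          calc ‖((∑ i, tx x i • q i) - itPts q r₀ w)
                - ((∑ i, tx x₁ i • q i) - itPts q r₀ w)‖
              ≤ ‖(∑ i, tx x i • q i) - itPts q r₀ w‖
                + ‖(∑ i, tx x₁ i • q i) - itPts q r₀ w‖ := norm_sub_le _ _
            _ ≤ ((n:ℝ)/(n+1))^r₀ * D + ((n:ℝ)/(n+1))^r₀ * D := add_le_add h1 h2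
            _ < δ := by linarith
        exact hbally (Metric.mem_ball.2 hdist)
      have : V w ⊆ EMetric.ball (xc y) (rc y) := hVsub.trans (hUsub y)
      exact lt_of_le_of_lt (setRadius_le this) (hrcR y)
  -- assembling
  set k := Fintype.card (It ι r₀) with hk
  set ε := Fintype.equivFin (It ι r₀) with hε
  set V' : Fin k → Set X := fun j => V (ε.symm j) with hV'
  have hwle : width X n ≤ ⨆ j, setRadius (V' j) := by
    refine width_le (fun j => hVopen _) ?_ ?_
    · ext x
      simp only [Set.mem_iUnion, Set.mem_univ, iff_true]
      have : x ∈ ⋃ w, V w := by rw [hVcover]; trivial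
      obtain ⟨w, hw⟩ := Set.mem_iUnion.1 this
      refine ⟨ε w, ?_⟩
      show x ∈ V (ε.symm (ε w))
      rw [Equiv.symm_apply_apply]
      exact hw
    · intro x
      have hcongr : Nat.card {j : Fin k // x ∈ V' j} = Nat.card {w : It ι r₀ // x ∈ V w} :=
        Nat.card_congr (ε.symm.subtypeEquiv fun j => Iff.rfl)
      rw [hcongr, Nat.card_eq_fintype_card, Fintype.card_subtype]
      exact hVmult x
  have hsupR : (⨆ j, setRadius (V' j)) < R := by
    have hle : (⨆ j, setRadius (V' j)) ≤ Finset.univ.sup (fun j => setRadius (V' j)) :=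
      iSup_le fun j => Finset.le_sup (f := fun j => setRadius (V' j)) (Finset.mem_univ j)
    refine lt_of_le_of_lt hle ?_
    rw [Finset.sup_lt_iff (show ⊥ < R from hR)]
    exact fun j _ => hVrad _
  exact lt_of_le_of_lt hwle hsupR

end WidthProof


/-- **Width via maps to simplicial complexes.** For a compact metric space `X`, one has
`width_n X < R` if and only if there is a finite simplicial complex `N` of dimension at
most `n` (realized geometrically in some Euclidean space) and a continuous map `ψ : X → N`
all of whose fibers have radius less than `R` in `X`. -/
theorem width_lt_iff_exists_map_to_complex
    {X : Type*} [MetricSpace X] [CompactSpace X] [Nonempty X]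
    (n : ℕ) (R : ℝ≥0∞) (hR : 0 < R) :
    width X n < R ↔
      ∃ (m : ℕ) (N : SimplicialComplex ℝ (EuclideanSpace ℝ (Fin m))),
        N.faces.Finite ∧
        (∀ s ∈ N.faces, s.card ≤ n + 1) ∧
        ∃ ψ : C(X, N.space), ∀ y : N.space, setRadius (⇑ψ ⁻¹' {y}) < R := by
  constructor
  · intro h
    exact WidthProof.forward_exists n R hR h
  · rintro ⟨m, N, hfin, hcard, ψ, hψ⟩
    exact WidthProof.converse_width_lt n R hR m N hfin hcard ψ hψ
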